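/- Assume Assumptions A1 and A2 hold. Then: (i) for every family σ_Λ of states on the subsystems X ∈ Λ, the primal value t(σ_Λ) is finite; (ii) there exists V_* in the relative interior (intrinsic interior over ℝ) of the cone 𝒞_{R|T} such that, for every family σ_Λ of states on the X ∈ Λ and every X ∈ Λ, the matrix tr_{S∖X}(V_*) − σ_X is positive definite. -/

import Mathlib

open scoped ComplexOrder ENNReal Kronecker Matrix

namespace RMP

variable {ι : Type} [Fintype ι] [DecidableEq ι]
variable (d : ι → Type) [∀ i, Fintype (d i)] [∀ i, DecidableEq (d i)] [∀ i, Nonempty (d i)]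

/-- The space of matrices on the global system. -/
abbrev GlobalMat : Type := Matrix (∀ i, d i) (∀ i, d i) ℂ

/-- The space of matrices on the subsystem `X`. -/
abbrev SubMat (X : Finset ι) : Type :=
  Matrix (∀ i : X, d i.1) (∀ i : X, d i.1) ℂ

/-- A quantum state: positive semidefinite with unit trace. -/
def IsState {m : Type} [Fintype m] (ρ : Matrix m m ℂ) : Prop :=
  ρ.PosSemidef ∧ ρ.trace = 1

/-- Combine an assignment on `X` with an assignment on its complement. -/
def combine (X : Finset ι) (a : ∀ i : X, d i.1) (c : ∀ i : (Xᶜ : Finset ι), d i.1) :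
    ∀ i, d i := fun i =>
  if h : i ∈ X then a ⟨i, h⟩ else c ⟨i, Finset.mem_compl.mpr h⟩

/-- Partial trace onto subsystem `X`. -/
noncomputable def ptrace (X : Finset ι) (ρ : GlobalMat d) : SubMat d X :=
  Matrix.of fun a b =>
    ∑ c : ∀ i : (Xᶜ : Finset ι), d i.1, ρ (combine d X a c) (combine d X b c)

variable (Λ : Finset (Finset ι)) (T : Finset ι) (F : Set (SubMat d T))

/-- The set `C_{R|T,Λ}` of `R`-free compatible families of marginals. -/
def CRT : Set (∀ X : Λ, SubMat d X.1) :=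
  {σ | ∃ ρ : GlobalMat d, IsState ρ ∧ (∀ X : Λ, ptrace d X.1 ρ = σ X) ∧ ptrace d T ρ ∈ F}

/-- The cone `𝒞_{R|T}`. -/
def coneRT : Set (GlobalMat d) :=
  {V | ∃ α : ℝ, 0 ≤ α ∧ ∃ η : GlobalMat d, IsState η ∧ ptrace d T η ∈ F ∧ V = α • η}

/-- A proper cone of global matrices. -/
def IsProperCone (C : Set (GlobalMat d)) : Prop :=
  C.Nonempty ∧ Convex ℝ C ∧ IsClosed C ∧
    (∀ (α : ℝ) (V : GlobalMat d), 0 ≤ α → V ∈ C → α • V ∈ C) ∧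
    (∀ V : GlobalMat d, V ∈ C → -V ∈ C → V = 0)

/-- The primal value `t(σ_Λ)`. -/
noncomputable def primal (σ : ∀ X : Λ, SubMat d X.1) : ℝ≥0∞ :=
  sInf {t | ∃ V ∈ coneRT d T F,
    (∀ X : Λ, (ptrace d X.1 V - σ X).PosSemidef) ∧ t = ENNReal.ofReal V.trace.re}

/-- The dual value `s(σ_Λ)`. -/
noncomputable def dual (σ : ∀ X : Λ, SubMat d X.1) : ℝ≥0∞ :=
  sSup {s | ∃ Y : ∀ X : Λ, SubMat d X.1,
    (∀ X : Λ, (Y X).PosSemidef) ∧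
    (∀ τ ∈ CRT d Λ T F, (∑ X : Λ, (τ X * Y X).trace.re) ≤ 1) ∧
    s = ENNReal.ofReal (∑ X : Λ, (σ X * Y X).trace.re)}


section MatrixAux
variable {n : Type} [Fintype n] [DecidableEq n]
open Matrix

set_option linter.unusedSectionVars false

lemma real_smul_eq (r : ℝ) (A : Matrix n n ℂ) : r • A = (r : ℂ) • A := by
  ext i j; simp [Matrix.smul_apply, Complex.real_smul]

lemma posSemidef_rsmul {A : Matrix n n ℂ} (hA : A.PosSemidef) {r : ℝ} (hr : 0 ≤ r) :
    (r • A).PosSemidef := by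
  rw [real_smul_eq]
  refine Matrix.PosSemidef.of_dotProduct_mulVec_nonneg ?_ fun x => ?_
  · unfold Matrix.IsHermitian
    rw [Matrix.conjTranspose_smul, hA.1.eq]
    simp [Complex.conj_ofReal]
  · rw [Matrix.smul_mulVec, dotProduct_smul]
    exact mul_nonneg (Complex.zero_le_real.mpr hr) (hA.dotProduct_mulVec_nonneg x)

lemma trace_eq_sum_eigenvalues {A : Matrix n n ℂ} (hA : A.IsHermitian) :
    A.trace = ∑ i, (hA.eigenvalues i : ℂ) := by
  conv_lhs => rw [hA.spectral_theorem]
  rw [Unitary.conjStarAlgAut_apply, Matrix.trace_mul_cycle,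
    show star (hA.eigenvectorUnitary : Matrix n n ℂ) * (hA.eigenvectorUnitary : Matrix n n ℂ) = 1
      from (Matrix.mem_unitaryGroup_iff').mp hA.eigenvectorUnitary.2,
    Matrix.one_mul, Matrix.trace_diagonal]
  rfl

lemma diag_posSemidef {f : n → ℝ} (hf : ∀ i, 0 ≤ f i) :
    (Matrix.diagonal (Complex.ofReal ∘ f)).PosSemidef :=
  Matrix.PosSemidef.diagonal (by
    intro i
    exact Complex.zero_le_real.mpr (hf i))

lemma conj_diag_posSemidef {A : Matrix n n ℂ} (hA : A.IsHermitian) {f : n → ℝ}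
    (hf : ∀ i, 0 ≤ f i) :
    ((hA.eigenvectorUnitary : Matrix n n ℂ) * Matrix.diagonal (Complex.ofReal ∘ f) *
      star (hA.eigenvectorUnitary : Matrix n n ℂ)).PosSemidef := by
  rw [Matrix.star_eq_conjTranspose]
  exact (diag_posSemidef hf).mul_mul_conjTranspose_same _

lemma conj_smul_one {A : Matrix n n ℂ} (hA : A.IsHermitian) (c : ℝ) :
    (hA.eigenvectorUnitary : Matrix n n ℂ) * ((c : ℂ) • (1 : Matrix n n ℂ)) *
      star (hA.eigenvectorUnitary : Matrix n n ℂ) = (c : ℂ) • (1 : Matrix n n ℂ) := by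
  rw [Matrix.mul_smul, Matrix.smul_mul, Matrix.mul_one,
    show (hA.eigenvectorUnitary : Matrix n n ℂ) * star (hA.eigenvectorUnitary : Matrix n n ℂ) = 1
      from (Matrix.mem_unitaryGroup_iff).mp hA.eigenvectorUnitary.2]

lemma diag_sub_smul (g : n → ℝ) (c : ℝ) :
    (Matrix.diagonal (Complex.ofReal ∘ fun i => g i - c) : Matrix n n ℂ)
      = Matrix.diagonal (Complex.ofReal ∘ g) - (c : ℂ) • (1 : Matrix n n ℂ) := by
  ext i j
  by_cases h : i = j <;>
    simp [Matrix.diagonal_apply, Matrix.one_apply, h, Complex.ofReal_sub, Matrix.smul_apply]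

lemma conj_diag_eq {A : Matrix n n ℂ} (hA : A.IsHermitian) (c : ℝ) :
    (hA.eigenvectorUnitary : Matrix n n ℂ) *
        Matrix.diagonal (Complex.ofReal ∘ (fun i => hA.eigenvalues i - c)) *
      star (hA.eigenvectorUnitary : Matrix n n ℂ) = A - c • (1 : Matrix n n ℂ) := by
  rw [diag_sub_smul, Matrix.mul_sub, Matrix.sub_mul, conj_smul_one hA c, real_smul_eq]
  congr 1
  exact (hA.spectral_theorem).symm

lemma conj_diag_eq' {A : Matrix n n ℂ} (hA : A.IsHermitian) (c : ℝ) :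
    (hA.eigenvectorUnitary : Matrix n n ℂ) *
        Matrix.diagonal (Complex.ofReal ∘ (fun i => c - hA.eigenvalues i)) *
      star (hA.eigenvectorUnitary : Matrix n n ℂ) = c • (1 : Matrix n n ℂ) - A := by
  have h : (Matrix.diagonal (Complex.ofReal ∘ fun i => c - hA.eigenvalues i) : Matrix n n ℂ)
      = (c : ℂ) • (1 : Matrix n n ℂ) - Matrix.diagonal (Complex.ofReal ∘ hA.eigenvalues) := by
    have := diag_sub_smul (n := n) (fun i => hA.eigenvalues i - c) (0)
    ext i j
    by_cases hij : i = j <;>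
      simp [Matrix.diagonal_apply, Matrix.one_apply, hij, Complex.ofReal_sub, Matrix.smul_apply]
  rw [h, Matrix.mul_sub, Matrix.sub_mul, conj_smul_one hA c, real_smul_eq]
  congr 1
  exact (hA.spectral_theorem).symm

lemma posDef_sub_smul_one {M : Matrix n n ℂ} [Nonempty n] (hM : M.PosDef) :
    ∃ ε : ℝ, 0 < ε ∧ (M - ε • (1 : Matrix n n ℂ)).PosSemidef := by
  obtain ⟨i0, -, hmin⟩ := Finset.exists_min_image Finset.univ hM.1.eigenvalues
    ⟨Classical.arbitrary n, Finset.mem_univ _⟩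
  refine ⟨hM.1.eigenvalues i0, hM.eigenvalues_pos i0, ?_⟩
  rw [← conj_diag_eq hM.1]
  exact conj_diag_posSemidef hM.1 fun i => sub_nonneg.mpr (hmin i (Finset.mem_univ i))

lemma one_sub_state {σ : Matrix n n ℂ} (hσ : σ.PosSemidef) (htr : σ.trace = 1) :
    ((1 : Matrix n n ℂ) - σ).PosSemidef := by
  have hsum : ∑ i, hσ.1.eigenvalues i = 1 := by
    have h1 : ((∑ i, hσ.1.eigenvalues i : ℝ) : ℂ) = 1 := by
      push_cast
      exact (trace_eq_sum_eigenvalues hσ.1).symm.trans htr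
    exact_mod_cast h1
  have hle : ∀ i, hσ.1.eigenvalues i ≤ 1 := by
    intro i
    rw [← hsum]
    exact Finset.single_le_sum (fun j _ => hσ.eigenvalues_nonneg j) (Finset.mem_univ i)
  have h := conj_diag_posSemidef hσ.1 (f := fun i => 1 - hσ.1.eigenvalues i)
    (fun i => sub_nonneg.mpr (hle i))
  rw [conj_diag_eq' hσ.1 1, one_smul] at h
  exact h

lemma posDef_rsmul_one {c : ℝ} (hc : 0 < c) : (c • (1 : Matrix n n ℂ)).PosDef := by
  rw [real_smul_eq, ← Matrix.diagonal_one, ← Matrix.diagonal_smul]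
  rw [Matrix.posDef_diagonal_iff]
  intro i
  simpa using Complex.zero_lt_real.mpr hc

lemma sub_state_posDef {M σ : Matrix n n ℂ} {ε a : ℝ}
    (hM : (M - ε • (1 : Matrix n n ℂ)).PosSemidef) (hσ : σ.PosSemidef) (htr : σ.trace = 1)
    (ha : 0 ≤ a) (hc : 1 < a * ε) : (a • M - σ).PosDef := by
  have h1 : a • M - σ = a • (M - ε • (1 : Matrix n n ℂ)) +
      ((a * ε - 1) • (1 : Matrix n n ℂ) + ((1 : Matrix n n ℂ) - σ)) := by
    module
  rw [h1]
  exact Matrix.PosDef.posSemidef_add (posSemidef_rsmul hM ha)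
    ((posDef_rsmul_one (by linarith)).add_posSemidef (one_sub_state hσ htr))

end MatrixAux

section PtraceAux
set_option linter.unusedSectionVars false
variable {ι : Type} [Fintype ι] [DecidableEq ι]
variable (d : ι → Type) [∀ i, Fintype (d i)] [∀ i, DecidableEq (d i)] [∀ i, Nonempty (d i)]
variable (X : Finset ι)

variable (X : Finset ι)

def combEquiv : ((∀ i : X, d i.1) × (∀ i : (Xᶜ : Finset ι), d i.1)) ≃ (∀ i, d i) where
  toFun p := combine d X p.1 p.2
  invFun x := (fun i => x i.1, fun i => x i.1)
  left_inv := by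
    rintro ⟨a, c⟩
    refine Prod.ext ?_ ?_
    · funext i
      simp only [combine]
      rw [dif_pos i.2]
    · funext i
      simp only [combine]
      rw [dif_neg (Finset.mem_compl.mp i.2)]
  right_inv := by
    intro x
    funext i
    simp only [combine]
    split <;> rfl

lemma res1_combine (a : ∀ i : X, d i.1) (c : ∀ i : (Xᶜ : Finset ι), d i.1) :
    (fun i : X => combine d X a c i.1) = a := congrArg Prod.fst ((combEquiv d X).left_inv (a, c))

lemma res2_combine (a : ∀ i : X, d i.1) (c : ∀ i : (Xᶜ : Finset ι), d i.1) :
    (fun i : (Xᶜ : Finset ι) => combine d X a c i.1) = c :=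
  congrArg Prod.snd ((combEquiv d X).left_inv (a, c))

lemma ptrace_apply (ρ : GlobalMat d) (a b : ∀ i : X, d i.1) :
    ptrace d X ρ a b = ∑ c : ∀ i : (Xᶜ : Finset ι), d i.1,
      ρ (combine d X a c) (combine d X b c) := rfl

lemma ptrace_add (ρ σ : GlobalMat d) : ptrace d X (ρ + σ) = ptrace d X ρ + ptrace d X σ := by
  ext a b
  simp [ptrace_apply, Matrix.add_apply, Finset.sum_add_distrib]

lemma ptrace_smul (r : ℝ) (ρ : GlobalMat d) : ptrace d X (r • ρ) = r • ptrace d X ρ := by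
  ext a b
  simp [ptrace_apply, Matrix.smul_apply, Finset.smul_sum]

lemma ptrace_isHermitian {ρ : GlobalMat d} (h : ρ.IsHermitian) :
    (ptrace d X ρ).IsHermitian := by
  refine Matrix.IsHermitian.ext fun a b => ?_
  rw [ptrace_apply, ptrace_apply]
  rw [star_sum]
  exact Finset.sum_congr rfl fun c _ => h.apply _ _

/-- the auxiliary vector -/
noncomputable def zvec (y : (∀ i : X, d i.1) → ℂ) (c : ∀ i : (Xᶜ : Finset ι), d i.1) :
    (∀ i, d i) → ℂ := fun x =>
  if (fun i : (Xᶜ : Finset ι) => x i.1) = c then y (fun i : X => x i.1) else 0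

lemma expand_quad (ρ : GlobalMat d) (z : (∀ i, d i) → ℂ) :
    dotProduct (star z) (ρ *ᵥ z)
      = ∑ p : ((∀ i : X, d i.1) × (∀ i : (Xᶜ : Finset ι), d i.1)),
          ∑ q : ((∀ i : X, d i.1) × (∀ i : (Xᶜ : Finset ι), d i.1)),
            star (z (combEquiv d X p)) * (ρ (combEquiv d X p) (combEquiv d X q) *
              z (combEquiv d X q)) := by
  unfold dotProduct Matrix.mulVec dotProduct
  simp only [Pi.star_apply, Finset.mul_sum]
  rw [← Equiv.sum_comp (combEquiv d X)
    (fun x => ∑ x', star (z x) * (ρ x x' * z x'))]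
  refine Finset.sum_congr rfl fun p _ => ?_
  rw [← Equiv.sum_comp (combEquiv d X)
    (fun x' => star (z (combEquiv d X p)) * (ρ (combEquiv d X p) x' * z x'))]

lemma zvec_combEquiv (y : (∀ i : X, d i.1) → ℂ) (c : ∀ i : (Xᶜ : Finset ι), d i.1)
    (p : ((∀ i : X, d i.1) × (∀ i : (Xᶜ : Finset ι), d i.1))) :
    zvec d X y c (combEquiv d X p) = if p.2 = c then y p.1 else 0 := by
  obtain ⟨a, c'⟩ := p
  simp only [zvec, combEquiv, Equiv.coe_fn_mk, res1_combine, res2_combine]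

lemma ptrace_posSemidef {ρ : GlobalMat d} (h : ρ.PosSemidef) :
    (ptrace d X ρ).PosSemidef := by
  refine Matrix.PosSemidef.of_dotProduct_mulVec_nonneg (ptrace_isHermitian d X h.1) fun y => ?_
  have key : dotProduct (star y) (ptrace d X ρ *ᵥ y)
      = ∑ c : ∀ i : (Xᶜ : Finset ι), d i.1,
          dotProduct (star (zvec d X y c)) (ρ *ᵥ (zvec d X y c)) := by
    have hterm : ∀ c : ∀ i : (Xᶜ : Finset ι), d i.1,
        dotProduct (star (zvec d X y c)) (ρ *ᵥ (zvec d X y c))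
          = ∑ a, ∑ b, star (y a) * (ρ (combine d X a c) (combine d X b c) * y b) := by
      intro c
      rw [expand_quad]
      rw [Fintype.sum_prod_type]
      refine Finset.sum_congr rfl fun a _ => ?_
      rw [Finset.sum_eq_single c]
      · rw [Fintype.sum_prod_type]
        refine Finset.sum_congr rfl fun b _ => ?_
        rw [Finset.sum_eq_single c]
        · rw [zvec_combEquiv d X y c (a, c), zvec_combEquiv d X y c (b, c)]
          rw [if_pos rfl, if_pos rfl]
          rfl
        · intro c2 _ hc2
          rw [zvec_combEquiv d X y c (b, c2)]
          simp only [if_neg hc2, mul_zero]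
        · exact fun hc => absurd (Finset.mem_univ c) hc
      · intro c1 _ hc1
        rw [Finset.sum_eq_zero]
        intro q _
        rw [zvec_combEquiv d X y c (a, c1)]
        simp only [if_neg hc1, star_zero, zero_mul]
      · exact fun hc => absurd (Finset.mem_univ c) hc
    rw [Finset.sum_congr rfl fun c _ => hterm c]
    -- expand the LHS
    unfold dotProduct Matrix.mulVec dotProduct
    simp only [ptrace_apply, Pi.star_apply, Finset.sum_mul, Finset.mul_sum]
    conv_rhs => rw [Finset.sum_comm]
    refine Finset.sum_congr rfl fun a _ => Finset.sum_comm
  rw [key]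
  exact Finset.sum_nonneg fun c _ => h.dotProduct_mulVec_nonneg (zvec d X y c)


end PtraceAux


section Half
variable {E : Type*} [NormedAddCommGroup E] [NormedSpace ℝ E]

lemma half_mem_intrinsicInterior {C : Set E} (hC : Convex ℝ C) (h0 : (0 : E) ∈ C)
    {x y : E} (hx : x ∈ intrinsicInterior ℝ C) (hy : y ∈ C) :
    (1/2 : ℝ) • x + (1/2 : ℝ) • y ∈ intrinsicInterior ℝ C := by
  obtain ⟨x', hx', rfl⟩ := hx
  haveI : Nonempty (affineSpan ℝ C) := ⟨⟨0, subset_affineSpan ℝ C h0⟩⟩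
  let p0 : affineSpan ℝ C := ⟨0, subset_affineSpan ℝ C h0⟩
  let e : (affineSpan ℝ C) ≃ᵃⁱ[ℝ] (affineSpan ℝ C).direction :=
    AffineIsometryEquiv.constVSub ℝ p0
  let s' : Set (affineSpan ℝ C) := Subtype.val ⁻¹' C
  have hyA : y ∈ affineSpan ℝ C := subset_affineSpan ℝ C hy
  let y' : affineSpan ℝ C := ⟨y, hyA⟩
  have hmA : (1/2 : ℝ) • (x' : E) + (1/2 : ℝ) • y ∈ affineSpan ℝ C := by
    have h := (affineSpan ℝ C).smul_vsub_vadd_mem (1/2 : ℝ) x'.2 hyA hyA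
    convert h using 1
    rw [vsub_eq_sub, vadd_eq_add]
    module
  let m' : affineSpan ℝ C := ⟨(1/2 : ℝ) • (x' : E) + (1/2 : ℝ) • y, hmA⟩
  have himg : (⇑e '' s') = (fun v : (affineSpan ℝ C).direction => ((e.symm v : affineSpan ℝ C) : E)) ⁻¹' C := by
    rw [show ⇑e '' s' = ⇑e.toEquiv '' s' from rfl, Equiv.image_eq_preimage_symm]
    rfl
  have ht : Convex ℝ (⇑e '' s') := by
    rw [himg]
    exact hC.affine_preimage (((affineSpan ℝ C).subtype).comp (e.symm.toAffineEquiv.toAffineMap))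
  have hint : ⇑e '' interior s' = interior (⇑e '' s') := by
    rw [← AffineIsometryEquiv.coe_toHomeomorph]
    exact e.toHomeomorph.image_interior s'
  have hmx : e x' ∈ interior (⇑e '' s') := by
    rw [← hint]
    exact Set.mem_image_of_mem _ hx'
  have hmy : e y' ∈ ⇑e '' s' := Set.mem_image_of_mem _ (by exact hy)
  have hcombo : (1/2 : ℝ) • (e x') + (1/2 : ℝ) • (e y') ∈ interior (⇑e '' s') :=
    ht.combo_interior_self_mem_interior hmx hmy (by norm_num) (by norm_num) (by norm_num)
  have hkey : e m' = (1/2 : ℝ) • (e x') + (1/2 : ℝ) • (e y') := by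
    apply Subtype.ext
    simp only [e, AffineIsometryEquiv.coe_constVSub, Submodule.coe_add, SetLike.val_smul,
      AffineSubspace.coe_vsub, vsub_eq_sub]
    show (0 : E) - ((1/2 : ℝ) • (x' : E) + (1/2 : ℝ) • y)
      = (1/2 : ℝ) • ((0 : E) - (x' : E)) + (1/2 : ℝ) • ((0 : E) - y)
    module
  have hm'int : m' ∈ interior s' := by
    have hmem : e m' ∈ ⇑e '' interior s' := by
      rw [hint, hkey]
      exact hcombo
    obtain ⟨w, hw, hew⟩ := hmem
    rwa [e.injective hew] at hw
  exact ⟨m', hm'int, rfl⟩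

end Half

section ConeLemmas
set_option linter.unusedSectionVars false
variable {ι : Type} [Fintype ι] [DecidableEq ι]
variable (d : ι → Type) [∀ i, Fintype (d i)] [∀ i, DecidableEq (d i)] [∀ i, Nonempty (d i)]

lemma coneRT_convex (T : Finset ι) (F : Set (SubMat d T)) (hFc : Convex ℝ F)
    {ρ : GlobalMat d} (hρ : IsState ρ) (hρF : ptrace d T ρ ∈ F) :
    Convex ℝ (coneRT d T F) := by
  rintro V₁ ⟨a₁, ha₁, η₁, hs₁, hf₁, rfl⟩ V₂ ⟨a₂, ha₂, η₂, hs₂, hf₂, rfl⟩ p q hp hq hpq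
  by_cases hβ : p * a₁ + q * a₂ = 0
  · have h1 : p * a₁ = 0 := by nlinarith [mul_nonneg hp ha₁, mul_nonneg hq ha₂]
    have h2 : q * a₂ = 0 := by nlinarith [mul_nonneg hp ha₁, mul_nonneg hq ha₂]
    refine ⟨0, le_refl 0, ρ, hρ, hρF, ?_⟩
    rw [zero_smul, smul_smul, smul_smul, h1, h2, zero_smul, zero_smul, add_zero]
  · have hβpos : 0 < p * a₁ + q * a₂ :=
      lt_of_le_of_ne (by positivity) (Ne.symm hβ)
    refine ⟨p * a₁ + q * a₂, hβpos.le,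
      (p * a₁ / (p * a₁ + q * a₂)) • η₁ + (q * a₂ / (p * a₁ + q * a₂)) • η₂, ⟨?_, ?_⟩, ?_, ?_⟩
    · exact (posSemidef_rsmul hs₁.1 (div_nonneg (mul_nonneg hp ha₁) hβpos.le)).add
        (posSemidef_rsmul hs₂.1 (div_nonneg (mul_nonneg hq ha₂) hβpos.le))
    · rw [Matrix.trace_add, Matrix.trace_smul, Matrix.trace_smul, hs₁.2, hs₂.2,
        Complex.real_smul, Complex.real_smul, mul_one, mul_one]
      have : (p * a₁ / (p * a₁ + q * a₂)) + (q * a₂ / (p * a₁ + q * a₂)) = 1 := by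
        field_simp
      exact_mod_cast this
    · rw [ptrace_add, ptrace_smul, ptrace_smul]
      exact hFc hf₁ hf₂ (div_nonneg (mul_nonneg hp ha₁) hβpos.le)
        (div_nonneg (mul_nonneg hq ha₂) hβpos.le) (by field_simp)
    · have e1 : (p * a₁ + q * a₂) * (p * a₁ / (p * a₁ + q * a₂)) = p * a₁ := by field_simp
      have e2 : (p * a₁ + q * a₂) * (q * a₂ / (p * a₁ + q * a₂)) = q * a₂ := by field_simp
      rw [smul_add, smul_smul, smul_smul, smul_smul, smul_smul, e1, e2]

end ConeLemmas

end RMP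

namespace RMP

/-- Lemma 6 of the paper, finiteness and Slater's condition.
Under Assumptions (A1) and (A2), the primal value is finite for every family of
marginal states, and there is a point `V_*` in the relative (intrinsic) interior of the
cone `𝒞_{R|T}` that is strictly feasible for every family of marginal states. -/
theorem primal_finite_and_slater
    {ι : Type} [Fintype ι] [DecidableEq ι]
    (d : ι → Type) [∀ i, Fintype (d i)] [∀ i, DecidableEq (d i)] [∀ i, Nonempty (d i)]
    (Λ : Finset (Finset ι)) (T : Finset ι) (F : Set (SubMat d T))
    (hF : ∀ η ∈ F, IsState η)
    (hA1 : Convex ℝ F ∧ IsCompact F)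
    (hA2 : ∃ ρ : GlobalMat d, IsState ρ ∧ ptrace d T ρ ∈ F ∧
      ∀ X : Λ, (ptrace d X.1 ρ).PosDef) :
    (∀ σ : ∀ X : Λ, SubMat d X.1, (∀ X : Λ, IsState (σ X)) →
      primal d Λ T F σ ≠ ⊤) ∧
    ∃ V : GlobalMat d, V ∈ intrinsicInterior ℝ (coneRT d T F) ∧
      ∀ σ : ∀ X : Λ, SubMat d X.1, (∀ X : Λ, IsState (σ X)) →
        ∀ X : Λ, (ptrace d X.1 V - σ X).PosDef := by
  classical
  obtain ⟨hFconv, hFcomp⟩ := hA1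
  obtain ⟨ρ, hρstate, hρF, hρPD⟩ := hA2
  have hchoice : ∀ X : Λ, ∃ ε : ℝ, 0 < ε ∧
      (ptrace d X.1 ρ - ε • (1 : SubMat d X.1)).PosSemidef := fun X =>
    posDef_sub_smul_one (hρPD X)
  choose ε hεpos hεPSD using hchoice
  set α : ℝ := 1 + ∑ X : Λ, 4 / ε X with hα
  have hsumnn : 0 ≤ ∑ X : Λ, 4 / ε X :=
    Finset.sum_nonneg fun X _ => le_of_lt (div_pos four_pos (hεpos X))
  have hα0 : 0 < α := by rw [hα]; linarith
  have hαmul : ∀ X : Λ, 4 < α * ε X := by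
    intro X
    have h1 : 4 / ε X ≤ ∑ Y : Λ, 4 / ε Y :=
      Finset.single_le_sum (fun Y _ => le_of_lt (div_pos four_pos (hεpos Y)))
        (Finset.mem_univ X)
    have h2 : 4 / ε X < α := by rw [hα]; linarith
    calc (4 : ℝ) = (4 / ε X) * ε X := (div_mul_cancel₀ (4 : ℝ) (hεpos X).ne').symm
    _ < α * ε X := mul_lt_mul_of_pos_right h2 (hεpos X)
  clear_value α
  have hαρC : α • ρ ∈ coneRT d T F := ⟨α, hα0.le, ρ, hρstate, hρF, rfl⟩
  constructor
  · -- finiteness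
    intro σ hσ
    have hmem : ENNReal.ofReal ((α • ρ : GlobalMat d).trace.re) ∈
        {t | ∃ V ∈ coneRT d T F,
          (∀ X : Λ, (ptrace d X.1 V - σ X).PosSemidef) ∧
          t = ENNReal.ofReal V.trace.re} := by
      refine ⟨α • ρ, hαρC, fun X => ?_, rfl⟩
      rw [ptrace_smul]
      exact (sub_state_posDef (hεPSD X) (hσ X).1 (hσ X).2 hα0.le
        (by have := hαmul X; linarith)).posSemidef
    exact ne_top_of_le_ne_top ENNReal.ofReal_ne_top (sInf_le hmem)
  · -- Slater point
    letI : NormedAddCommGroup (GlobalMat d) := Matrix.normedAddCommGroup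
    letI : NormedSpace ℝ (GlobalMat d) := Matrix.normedSpace
    have hconv : Convex ℝ (coneRT d T F) := coneRT_convex d T F hFconv hρstate hρF
    have h0C : (0 : GlobalMat d) ∈ coneRT d T F :=
      ⟨0, le_refl 0, ρ, hρstate, hρF, (zero_smul ℝ ρ).symm⟩
    obtain ⟨V₀, hV₀⟩ := Set.Nonempty.intrinsicInterior hconv ⟨0, h0C⟩
    have hV₀C : V₀ ∈ coneRT d T F := intrinsicInterior_subset hV₀
    refine ⟨(1/2 : ℝ) • V₀ + (1/2 : ℝ) • (α • ρ),
      half_mem_intrinsicInterior hconv h0C hV₀ hαρC, ?_⟩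
    intro σ hσ X
    obtain ⟨a₀, ha₀, η₀, hη₀, hη₀F, hV₀eq⟩ := hV₀C
    have hptr : ptrace d X.1 ((1/2 : ℝ) • V₀ + (1/2 : ℝ) • (α • ρ))
        = (1/2 : ℝ) • ptrace d X.1 V₀ + (α/2) • ptrace d X.1 ρ := by
      rw [ptrace_add, ptrace_smul, ptrace_smul, ptrace_smul, smul_smul,
        show (1/2 : ℝ) * α = α / 2 by ring]
    have hPSD0 : (ptrace d X.1 V₀).PosSemidef := by
      rw [hV₀eq, ptrace_smul]
      exact posSemidef_rsmul (ptrace_posSemidef d X.1 hη₀.1) ha₀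
    have hPD : ((α/2) • ptrace d X.1 ρ - σ X).PosDef :=
      sub_state_posDef (hεPSD X) (hσ X).1 (hσ X).2 (by linarith)
        (by
          have h4 := hαmul X
          have h5 : α / 2 * ε X = α * ε X / 2 := by ring
          linarith)
    have heq : ptrace d X.1 ((1/2 : ℝ) • V₀ + (1/2 : ℝ) • (α • ρ)) - σ X
        = (1/2 : ℝ) • ptrace d X.1 V₀ + ((α/2) • ptrace d X.1 ρ - σ X) := by
      rw [hptr, add_sub_assoc]
    rw [heq]
    exact Matrix.PosDef.posSemidef_add (posSemidef_rsmul hPSD0 (by norm_num)) hPD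

end RMP
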